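/- Let K be a finite field with q elements, let L be a field extension of K of degree n, and let V be an r-dimensional L-vector space with 2 ≤ r ≤ n. Then for every integer i with r ≤ i ≤ n there exists an (r−1)-scattered K-subspace of V of K-dimension i. -/

import Mathlib

open Polynomial Module

section aux

variable (K L : Type*) [Field K] [Fintype K] [Field L] [Algebra K L]

/-- The `K`-linear map `x ↦ x ^ (#K)^j` on `L`. -/
noncomputable def qpowL (j : ℕ) : L →ₗ[K] L where
  toFun x := x ^ (Fintype.card K) ^ j
  map_add' x y := by
    obtain ⟨m, hp, hq⟩ := FiniteField.card K (ringChar K)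
    haveI : Fact (ringChar K).Prime := ⟨hp⟩
    haveI : CharP L (ringChar K) :=
      charP_of_injective_algebraMap (algebraMap K L).injective _
    haveI : ExpChar L (ringChar K) := .prime hp
    simp only [hq, ← pow_mul]
    exact add_pow_expChar_pow ..
  map_smul' c x := by
    simp only [RingHom.id_apply, Algebra.smul_def, mul_pow]
    rw [← map_pow, FiniteField.pow_card_pow]

@[simp] lemma qpowL_apply (j : ℕ) (x : L) :
    qpowL K L j x = x ^ (Fintype.card K) ^ j := rfl

end aux

def IsHScattered (K L V : Type*) [Field K] [Field L] [Algebra K L]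
    [AddCommGroup V] [Module L V] [Module K V] [IsScalarTower K L V]
    (h : ℕ) (U : Submodule K V) : Prop :=
  Submodule.span L (U : Set V) = ⊤ ∧
  ∀ S : Submodule L V, Module.finrank L S = h →
    Module.finrank K ↥(U ⊓ S.restrictScalars K) ≤ h

theorem stmt1 (n r : ℕ) (K L V : Type*) [Field K] [Fintype K] [Field L] [Algebra K L]
    [AddCommGroup V] [Module L V] [Module K V] [IsScalarTower K L V]
    [FiniteDimensional K L] [FiniteDimensional L V]
    (hn : Module.finrank K L = n) (hr : Module.finrank L V = r)
    (hr2 : 2 ≤ r) (hrn : r ≤ n) :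
    ∀ i : ℕ, r ≤ i → i ≤ n →
      ∃ U : Submodule K V, IsHScattered K L V (r - 1) U ∧ Module.finrank K ↥U = i := by
  intro i hri hin
  classical
  set q := Fintype.card K with hqdef
  have hq1 : 1 < q := Fintype.one_lt_card
  haveI : FiniteDimensional K V := FiniteDimensional.trans K L V
  haveI : Fintype L := Module.fintypeOfFintype (Module.finBasis K L)
  -- basis of V over L
  let b : Basis (Fin r) L V := Module.finBasisOfFinrankEq L V hr
  -- the K-linear map x ↦ ∑ x^(q^j) • b j
  let φ : L →ₗ[K] V :=
    ∑ j : Fin r, ((LinearMap.toSpanSingleton L V (b j)).restrictScalars K).comp (qpowL K L j)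
  have hφ : ∀ x : L, φ x = ∑ j : Fin r, x ^ q ^ (j : ℕ) • b j := by
    intro x
    simp [φ, LinearMap.sum_apply, LinearMap.toSpanSingleton_apply]
    rfl
  have hφinj : Function.Injective φ := by
    rw [← LinearMap.ker_eq_bot, LinearMap.ker_eq_bot']
    intro x hx
    rw [hφ] at hx
    have := Fintype.linearIndependent_iff.mp b.linearIndependent
      (fun j => x ^ q ^ (j : ℕ)) hx ⟨0, by omega⟩
    simpa using this
  -- the subspace W of L of dimension i
  have hli : LinearIndependent K ((Module.finBasisOfFinrankEq K L hn) ∘ Fin.castLE hin) :=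
    (Module.finBasisOfFinrankEq K L hn).linearIndependent.comp _ (Fin.castLE_injective hin)
  set W : Submodule K L :=
    Submodule.span K (Set.range ((Module.finBasisOfFinrankEq K L hn) ∘ Fin.castLE hin)) with hWdef
  have hWrank : Module.finrank K W = i := by
    rw [finrank_span_eq_card hli, Fintype.card_fin]
  have hWcard : Nat.card W = q ^ i := by
    haveI : Fintype ↥W := Fintype.ofFinite _
    rw [Nat.card_eq_fintype_card, card_eq_pow_finrank (K := K) (V := ↥W), hWrank]
  -- key lemma: if a nonzero L-functional kills φ(T), then T is small
  have key : ∀ f : V →ₗ[L] L, f ≠ 0 → ∀ T : Submodule K L,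
      (∀ x ∈ T, f (φ x) = 0) → Module.finrank K T ≤ r - 1 := by
    intro f hf T hT
    set P : L[X] := ∑ j : Fin r, C (f (b j)) * X ^ q ^ (j : ℕ) with hPdef
    have hev : ∀ x : L, P.eval x = f (φ x) := by
      intro x
      rw [hφ, map_sum, hPdef, eval_finset_sum]
      refine Finset.sum_congr rfl fun j _ => ?_
      rw [eval_mul, eval_C, eval_pow, eval_X, map_smul, smul_eq_mul, mul_comm]
    obtain ⟨j0, hj0⟩ : ∃ j0 : Fin r, f (b j0) ≠ 0 := by
      by_contra h
      push_neg at h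
      exact hf (b.ext fun j => by simp [h j])
    have hcoeff : P.coeff (q ^ (j0 : ℕ)) = f (b j0) := by
      rw [hPdef, finset_sum_coeff, Finset.sum_eq_single j0]
      · simp [coeff_C_mul, coeff_X_pow]
      · intro j _ hj
        have hne : ¬ (q ^ (j0 : ℕ) = q ^ (j : ℕ)) := fun hc =>
          hj (Fin.ext (Nat.pow_right_injective hq1 hc.symm))
        simp [coeff_C_mul, coeff_X_pow, hne]
      · intro h
        exact absurd (Finset.mem_univ j0) h
    have hP0 : P ≠ 0 := fun h => hj0 (by rw [← hcoeff, h, coeff_zero])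
    have hdeg : P.natDegree ≤ q ^ (r - 1) := by
      apply natDegree_sum_le_of_forall_le
      intro j _
      refine (natDegree_C_mul_X_pow_le _ _).trans ?_
      have := j.isLt
      exact Nat.pow_le_pow_right (by omega) (by omega)
    have hsub : (T : Set L) ⊆ ↑P.roots.toFinset := by
      intro x hx
      simp only [Finset.mem_coe, Multiset.mem_toFinset]
      rw [mem_roots hP0]
      exact (hev x).trans (hT x hx)
    have hcard : Nat.card T ≤ q ^ (r - 1) := by
      calc Nat.card T = (T : Set L).ncard := Nat.card_coe_set_eq _
        _ ≤ (↑P.roots.toFinset : Set L).ncard := Set.ncard_le_ncard hsub (Set.toFinite _)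
        _ = P.roots.toFinset.card := Set.ncard_coe_finset _
        _ ≤ Multiset.card P.roots := Multiset.toFinset_card_le _
        _ ≤ P.natDegree := P.card_roots'
        _ ≤ q ^ (r - 1) := hdeg
    haveI : Fintype ↥T := Fintype.ofFinite _
    have hle : q ^ Module.finrank K ↥T ≤ q ^ (r - 1) := by
      rw [← card_eq_pow_finrank (K := K) (V := ↥T), ← Nat.card_eq_fintype_card]
      exact hcard
    exact (Nat.pow_le_pow_iff_right hq1).mp hle
  refine ⟨W.map φ, ⟨?_, ?_⟩, ?_⟩
  -- key cardinality lemma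
  case _ =>
    by_contra hspan
    obtain ⟨f, hf0, hfmap⟩ := Submodule.exists_dual_map_eq_bot_of_lt_top
      (lt_top_iff_ne_top.mpr hspan) inferInstance
    have hT : ∀ x ∈ W, f (φ x) = 0 := by
      intro x hx
      have hmem : φ x ∈ Submodule.span L ((W.map φ : Submodule K V) : Set V) :=
        Submodule.subset_span ⟨x, hx, rfl⟩
      have : f (φ x) ∈ (Submodule.span L ((W.map φ : Submodule K V) : Set V)).map f :=
        Submodule.mem_map_of_mem hmem
      rw [hfmap] at this
      exact Submodule.mem_bot L |>.mp this
    have := key f hf0 W hT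
    omega
  case _ =>
    intro S hS
    have hSlt : S < ⊤ := by
      rw [lt_top_iff_ne_top]
      intro h
      rw [h, finrank_top, hr] at hS
      omega
    obtain ⟨f, hf0, hfmap⟩ := Submodule.exists_dual_map_eq_bot_of_lt_top hSlt inferInstance
    set T : Submodule K L := W ⊓ Submodule.comap φ (S.restrictScalars K) with hTdef
    have hle : W.map φ ⊓ S.restrictScalars K ≤ T.map φ := by
      intro u hu
      obtain ⟨hu1, hu2⟩ := Submodule.mem_inf.mp hu
      obtain ⟨x, hx, rfl⟩ := hu1
      exact ⟨x, ⟨hx, hu2⟩, rfl⟩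
    have hTker : ∀ x ∈ T, f (φ x) = 0 := by
      intro x hx
      have hmemS : φ x ∈ S := (Submodule.mem_inf.mp hx).2
      have : f (φ x) ∈ S.map f := Submodule.mem_map_of_mem hmemS
      rw [hfmap] at this
      exact Submodule.mem_bot L |>.mp this
    calc Module.finrank K ↥(W.map φ ⊓ S.restrictScalars K)
        ≤ Module.finrank K ↥(T.map φ) := Submodule.finrank_mono hle
      _ = Module.finrank K ↥T := ((Submodule.equivMapOfInjective φ hφinj T).finrank_eq).symm
      _ ≤ r - 1 := key f hf0 T hTker
  case _ =>
    rw [← hWrank]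
    exact (Submodule.equivMapOfInjective φ hφinj W).finrank_eq.symm
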